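/- No linear operator on a finite-dimensional complex Hilbert space ℂⁿ is Li-Yorke chaotic. -/

import Mathlib

open Filter Topology Polynomial

/-- A pair `{x, y}` is a Li-Yorke chaotic pair for the operator `T`. -/
def LiYorkePair {E : Type*} [NormedAddCommGroup E] [NormedSpace ℂ E]
    (T : E →L[ℂ] E) (x y : E) : Prop :=
  0 < Filter.limsup (fun m => ‖(T ^ m) x - (T ^ m) y‖) Filter.atTop ∧
    Filter.liminf (fun m => ‖(T ^ m) x - (T ^ m) y‖) Filter.atTop = 0

/-- `T` is Li-Yorke chaotic. -/
def LiYorkeChaotic {E : Type*} [NormedAddCommGroup E] [NormedSpace ℂ E]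
    (T : E →L[ℂ] E) : Prop :=
  ∃ Γ : Set E, ¬Γ.Countable ∧ ∀ x ∈ Γ, ∀ y ∈ Γ, x ≠ y → LiYorkePair T x y


section Aux

variable {E : Type*} [NormedAddCommGroup E] [NormedSpace ℂ E]

/-- Binomial expansion of `T^m` applied to a vector killed by `(T - λ)^k`. -/
lemma pow_apply_eq_sum (T : E →L[ℂ] E) (lam : ℂ) (k : ℕ) (w : E)
    (hw : ((T - lam • 1) ^ k) w = 0) (m : ℕ) :
    (T ^ m) w = ∑ j ∈ Finset.range k,
      ((m.choose j : ℂ) * lam ^ (m - j)) • (((T - lam • 1) ^ j) w) := by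
  set N : E →L[ℂ] E := T - lam • 1 with hN
  have hc : Commute N (lam • 1) := (Commute.one_right N).smul_right lam
  have hT : T = N + lam • 1 := by rw [hN]; abel
  have hb : T ^ m = ∑ j ∈ Finset.range (m + 1),
      N ^ j * (lam • 1) ^ (m - j) * ((m.choose j : ℕ) : E →L[ℂ] E) := by
    rw [hT]; exact Commute.add_pow hc m
  have hterm : ∀ j, (N ^ j * (lam • 1) ^ (m - j) * ((m.choose j : ℕ) : E →L[ℂ] E)) w
      = ((m.choose j : ℂ) * lam ^ (m - j)) • ((N ^ j) w) := by
    intro j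
    have h1 : ((lam • (1 : E →L[ℂ] E)) ^ (m - j)) = lam ^ (m - j) • 1 := by
      rw [_root_.smul_pow, one_pow]
    have h2 : ((m.choose j : ℕ) : E →L[ℂ] E) = ((m.choose j : ℂ)) • 1 := by
      rw [← map_natCast (algebraMap ℂ (E →L[ℂ] E)) (m.choose j), Algebra.algebraMap_eq_smul_one]
    rw [h1, h2]
    simp [ContinuousLinearMap.mul_apply, smul_smul, mul_comm]
  have happ : (T ^ m) w = ∑ j ∈ Finset.range (m + 1),
      ((m.choose j : ℂ) * lam ^ (m - j)) • ((N ^ j) w) := by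
    rw [hb, ContinuousLinearMap.sum_apply]
    exact Finset.sum_congr rfl fun j _ => hterm j
  set t : ℕ → E := fun j => ((m.choose j : ℂ) * lam ^ (m - j)) • ((N ^ j) w) with ht
  have hzero1 : ∀ j, m + 1 ≤ j → t j = 0 := by
    intro j hj
    have : m.choose j = 0 := Nat.choose_eq_zero_of_lt (by omega)
    simp [ht, this]
  have hzero2 : ∀ j, k ≤ j → t j = 0 := by
    intro j hj
    have : (N ^ j) w = 0 := by
      have : N ^ j = N ^ (j - k) * N ^ k := by
        rw [← pow_add]; congr 1; omega
      rw [this, ContinuousLinearMap.mul_apply, hw, map_zero]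
    simp only [ht, this, smul_zero]
  have hbig1 : ∑ j ∈ Finset.range (m + 1), t j = ∑ j ∈ Finset.range (max (m + 1) k), t j := by
    apply Finset.sum_subset (Finset.range_subset_range.mpr (le_max_left _ _))
    intro j _ hj
    exact hzero1 j (by simpa using hj)
  have hbig2 : ∑ j ∈ Finset.range k, t j = ∑ j ∈ Finset.range (max (m + 1) k), t j := by
    apply Finset.sum_subset (Finset.range_subset_range.mpr (le_max_right _ _))
    intro j _ hj
    exact hzero2 j (by simpa using hj)
  rw [happ, hbig1, ← hbig2]

lemma choose_mul_geom_tendsto (j : ℕ) {r : ℝ} (h0 : 0 ≤ r) (h1 : r < 1) :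
    Tendsto (fun m : ℕ => (m.choose j : ℝ) * r ^ (m - j)) atTop (𝓝 0) := by
  rcases eq_or_lt_of_le h0 with h | h
  · apply tendsto_const_nhds.congr'
    filter_upwards [eventually_ge_atTop (j + 1)] with m hm
    rw [← h, zero_pow (by omega)]
    simp
  · have hsum : Tendsto (fun m : ℕ => (m : ℝ) ^ j * r ^ m) atTop (𝓝 0) := by
      have := summable_pow_mul_geometric_of_norm_lt_one (R := ℝ) j
        (r := r) (by rwa [Real.norm_eq_abs, abs_of_pos h])
      exact this.tendsto_atTop_zero
    have hlim : Tendsto (fun m : ℕ => (r ^ j)⁻¹ * ((m : ℝ) ^ j * r ^ m)) atTop (𝓝 0) := by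
      simpa using hsum.const_mul ((r ^ j)⁻¹)
    apply squeeze_zero' _ _ hlim
    · filter_upwards with m
      positivity
    · filter_upwards [eventually_ge_atTop j] with m hm
      have hpow : r ^ (m - j) = r ^ m * (r ^ j)⁻¹ := pow_sub₀ r (ne_of_gt h) hm
      have hch : (m.choose j : ℝ) ≤ (m : ℝ) ^ j := by
        exact_mod_cast Nat.cast_le.mpr (Nat.choose_le_pow m j)
      calc (m.choose j : ℝ) * r ^ (m - j) ≤ (m : ℝ) ^ j * r ^ (m - j) := by
            apply mul_le_mul_of_nonneg_right hch (by positivity)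
        _ = (r ^ j)⁻¹ * ((m : ℝ) ^ j * r ^ m) := by rw [hpow]; ring

/-- decay on the generalized eigenspace of a small eigenvalue -/
lemma decay (T : E →L[ℂ] E) (lam : ℂ) (hlam : ‖lam‖ < 1) (k : ℕ) (w : E)
    (hw : ((T - lam • 1) ^ k) w = 0) :
    Tendsto (fun m => (T ^ m) w) atTop (𝓝 0) := by
  rw [tendsto_zero_iff_norm_tendsto_zero]
  have hbound : ∀ m, ‖(T ^ m) w‖ ≤ ∑ j ∈ Finset.range k,
      (m.choose j : ℝ) * ‖lam‖ ^ (m - j) * ‖((T - lam • 1) ^ j) w‖ := by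
    intro m
    rw [pow_apply_eq_sum T lam k w hw m]
    refine (norm_sum_le _ _).trans (le_of_eq (Finset.sum_congr rfl fun j _ => ?_))
    rw [norm_smul, norm_mul, norm_pow]
    simp [mul_assoc]
  have hlim : Tendsto (fun m => ∑ j ∈ Finset.range k,
      (m.choose j : ℝ) * ‖lam‖ ^ (m - j) * ‖((T - lam • 1) ^ j) w‖) atTop (𝓝 0) := by
    have := tendsto_finset_sum (Finset.range k)
      (fun j _ => ((choose_mul_geom_tendsto j (norm_nonneg lam) hlam).mul_const
        (‖((T - lam • 1) ^ j) w‖)))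
    simpa using this
  exact squeeze_zero (fun m => norm_nonneg _) hbound hlim

end Aux


section Aux2

variable {E : Type*} [NormedAddCommGroup E] [NormedSpace ℂ E]

/-- bridge between `Module.End` powers and continuous linear map powers -/
lemma end_pow_apply (T : E →L[ℂ] E) (lam : ℂ) (p : ℕ) :
    ∀ x : E, (((T : E →ₗ[ℂ] E) - lam • 1) ^ p) x = ((T - lam • 1) ^ p) x := by
  induction p with
  | zero => intro x; simp
  | succ p ih =>
    intro x
    rw [pow_succ, pow_succ, Module.End.mul_apply, ContinuousLinearMap.mul_apply]
    rw [show ((T : E →ₗ[ℂ] E) - lam • 1) x = (T - lam • 1) x from by simp]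
    exact ih _

variable (f : Module.End ℂ E)

lemma aeval_X_sub_C_eq (ν : ℂ) :
    Polynomial.aeval f (X - C ν) = f - ν • 1 := by
  simp [Algebra.algebraMap_eq_smul_one]

lemma aeval_commute (P Q : ℂ[X]) :
    Commute (Polynomial.aeval f P) (Polynomial.aeval f Q) := by
  simpa [Commute, SemiconjBy, ← map_mul] using congrArg (Polynomial.aeval f) (mul_comm P Q)

lemma maxGen_invariant {μ : ℂ} {u : E} (hu : u ∈ f.maxGenEigenspace μ) (Q : ℂ[X]) :
    (Polynomial.aeval f Q) u ∈ f.maxGenEigenspace μ := by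
  obtain ⟨K, hK⟩ := (Module.End.mem_maxGenEigenspace f μ u).mp hu
  refine (Module.End.mem_maxGenEigenspace f μ _).mpr ⟨K, ?_⟩
  have hcomm : ((f - μ • 1) ^ K) * (Polynomial.aeval f Q)
      = (Polynomial.aeval f Q) * ((f - μ • 1) ^ K) := by
    have := aeval_commute f (((X : ℂ[X]) - C μ) ^ K) Q
    rwa [map_pow, aeval_X_sub_C_eq] at this
  calc ((f - μ • 1) ^ K) ((Polynomial.aeval f Q) u)
      = (((f - μ • 1) ^ K) * (Polynomial.aeval f Q)) u := rfl
    _ = ((Polynomial.aeval f Q) * ((f - μ • 1) ^ K)) u := by rw [hcomm]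
    _ = (Polynomial.aeval f Q) (((f - μ • 1) ^ K) u) := rfl
    _ = 0 := by rw [hK, map_zero]

lemma single_inj {μ ν : ℂ} (hμν : ν ≠ μ) {u : E} (hu : u ∈ f.maxGenEigenspace μ)
    (h : (f - ν • 1) u = 0) : u = 0 := by
  have h1 : u ∈ f.maxGenEigenspace ν :=
    (Module.End.mem_maxGenEigenspace f ν u).mpr ⟨1, by simpa using h⟩
  exact Submodule.disjoint_def.mp (f.disjoint_genEigenspace (Ne.symm hμν) ⊤ ⊤) u hu h1

lemma pow_inj {μ ν : ℂ} (hμν : ν ≠ μ) (d : ℕ) {u : E} (hu : u ∈ f.maxGenEigenspace μ)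
    (h : ((f - ν • 1) ^ d) u = 0) : u = 0 := by
  induction d generalizing u with
  | zero => simpa using h
  | succ d ih =>
    have hstep : ((f - ν • 1) ^ d) ((f - ν • 1) u) = 0 := by
      rw [← Module.End.mul_apply, ← pow_succ]
      exact h
    have hmem : (f - ν • 1) u ∈ f.maxGenEigenspace μ := by
      have := maxGen_invariant f hu (X - C ν)
      rwa [aeval_X_sub_C_eq] at this
    exact single_inj f hμν hu (ih hmem hstep)

lemma prod_inj {μ : ℂ} (s : Finset ℂ) (hs : μ ∉ s) (k : ℂ → ℕ) {v : E}
    (hv : v ∈ f.maxGenEigenspace μ)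
    (h0 : (Polynomial.aeval f (∏ ν ∈ s, ((X : ℂ[X]) - C ν) ^ (k ν))) v = 0) : v = 0 := by
  induction s using Finset.induction_on generalizing v with
  | empty => simpa using h0
  | @insert a s ha ih =>
    rw [Finset.prod_insert ha, map_mul, Module.End.mul_apply] at h0
    have hva : (Polynomial.aeval f (∏ ν ∈ s, ((X : ℂ[X]) - C ν) ^ (k ν))) v
        ∈ f.maxGenEigenspace μ := maxGen_invariant f hv _
    have h1 : (Polynomial.aeval f (((X : ℂ[X]) - C a) ^ (k a)))
        ((Polynomial.aeval f (∏ ν ∈ s, ((X : ℂ[X]) - C ν) ^ (k ν))) v) = 0 := h0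
    rw [map_pow, aeval_X_sub_C_eq] at h1
    have hane : a ≠ μ := fun hh => hs (hh ▸ Finset.mem_insert_self a s)
    have := pow_inj f hane (k a) hva h1
    exact ih (fun hh => hs (Finset.mem_insert_of_mem hh)) hv this

end Aux2

theorem finite_dim_not_liYorkeChaotic (n : ℕ) (hn : 0 < n)
    (T : EuclideanSpace ℂ (Fin n) →L[ℂ] EuclideanSpace ℂ (Fin n)) :
    ¬ LiYorkeChaotic T := by
  classical
  rintro ⟨Γ, hΓ, hpairs⟩
  obtain ⟨x, hx, y, hy, hxy⟩ : ∃ x ∈ Γ, ∃ y ∈ Γ, x ≠ y := by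
    by_contra h
    push_neg at h
    exact hΓ (Set.Subsingleton.countable h)
  obtain ⟨hpos, hlim⟩ := hpairs x hx y hy hxy
  set z : EuclideanSpace ℂ (Fin n) := x - y with hzdef
  have hzne : z ≠ 0 := sub_ne_zero.mpr hxy
  set u : ℕ → ℝ := fun m => ‖(T ^ m) z‖ with hu
  have hfun : (fun m => ‖(T ^ m) x - (T ^ m) y‖) = u := by
    funext m
    show ‖(T ^ m) x - (T ^ m) y‖ = ‖(T ^ m) z‖
    rw [hzdef, map_sub]
  rw [hfun] at hpos hlim
  -- boundedness from positivity of limsup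
  have hbdd : IsBoundedUnder (· ≤ ·) atTop u := by
    by_contra hb
    have hS : {a : ℝ | ∀ᶠ m in atTop, u m ≤ a} = ∅ := by
      ext a
      simp only [Set.mem_setOf_eq, Set.mem_empty_iff_false, iff_false]
      intro ha
      exact hb ⟨a, eventually_map.mpr ha⟩
    have h0 : limsup u atTop = 0 := by
      rw [limsup_eq, hS, Real.sInf_empty]
    rw [h0] at hpos
    exact lt_irrefl 0 hpos
  have hfreq : ∀ ε : ℝ, 0 < ε → ∃ᶠ m in atTop, u m < ε := by
    intro ε hε
    exact frequently_lt_of_liminf_lt hbdd.isCoboundedUnder_ge (by rw [hlim]; exact hε)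
  -- spectral decomposition
  set f : Module.End ℂ (EuclideanSpace ℂ (Fin n)) :=
    (T : EuclideanSpace ℂ (Fin n) →ₗ[ℂ] EuclideanSpace ℂ (Fin n)) with hf
  have hz : z ∈ ⨆ μ : ℂ, f.maxGenEigenspace μ := by
    rw [Module.End.iSup_maxGenEigenspace_eq_top f]
    trivial
  rw [Submodule.mem_iSup_iff_exists_finsupp] at hz
  obtain ⟨c, hc, hsum⟩ := hz
  have hmem : ∀ ν : ℂ, ∃ k : ℕ, ((f - ν • 1) ^ k) (c ν) = 0 :=
    fun ν => (Module.End.mem_maxGenEigenspace f ν (c ν)).mp (hc ν)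
  set k : ℂ → ℕ := fun ν => (hmem ν).choose with hkdef
  have hk : ∀ ν : ℂ, ((f - ν • 1) ^ (k ν)) (c ν) = 0 := fun ν => (hmem ν).choose_spec
  have hcoe : ∀ (m : ℕ) (w : EuclideanSpace ℂ (Fin n)), (f ^ m) w = (T ^ m) w := by
    intro m
    induction m with
    | zero => intro w; simp
    | succ m ih =>
      intro w
      rw [pow_succ, pow_succ, Module.End.mul_apply, ContinuousLinearMap.mul_apply, ih]
      rfl
  have hz' : z = ∑ ν ∈ c.support, c ν := by rw [← hsum]; rfl
  -- Step 1: components at eigenvalues of modulus ≥ 1 vanish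
  have hbig : ∀ μ : ℂ, 1 ≤ ‖μ‖ → c μ = 0 := by
    intro μ hμ
    by_contra hne
    have hμsupp : μ ∈ c.support := Finsupp.mem_support_iff.mpr hne
    set P : ℂ[X] := ∏ ν ∈ c.support.erase μ, ((X : ℂ[X]) - C ν) ^ (k ν) with hP
    set q : Module.End ℂ (EuclideanSpace ℂ (Fin n)) := Polynomial.aeval f P with hq
    have hqkill : ∀ ν ∈ c.support.erase μ, q (c ν) = 0 := by
      intro ν hν
      have hsplit : P = (∏ ρ ∈ (c.support.erase μ).erase ν, ((X : ℂ[X]) - C ρ) ^ (k ρ))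
          * ((X : ℂ[X]) - C ν) ^ (k ν) := (Finset.prod_erase_mul _ _ hν).symm
      rw [hq, hsplit, map_mul, Module.End.mul_apply, map_pow, aeval_X_sub_C_eq, hk, map_zero]
    have hqz : q z = q (c μ) := by
      rw [hz', map_sum]
      apply Finset.sum_eq_single_of_mem μ hμsupp
      intro ν hν hνμ
      exact hqkill ν (Finset.mem_erase.mpr ⟨hνμ, hν⟩)
    set w₀ : EuclideanSpace ℂ (Fin n) := q (c μ) with hw₀
    have hw₀mem : w₀ ∈ f.maxGenEigenspace μ := maxGen_invariant f (hc μ) P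
    have hw₀ne : w₀ ≠ 0 := by
      intro h0
      exact hne (prod_inj f (c.support.erase μ) (Finset.notMem_erase μ _) k (hc μ) h0)
    have hex : ∃ j : ℕ, ((f - μ • 1) ^ j) w₀ = 0 :=
      (Module.End.mem_maxGenEigenspace f μ w₀).mp hw₀mem
    set j₀ : ℕ := Nat.find hex with hj₀
    have hj₀ne : j₀ ≠ 0 := by
      intro h0
      have hspec := Nat.find_spec hex
      rw [← hj₀, h0] at hspec
      simp only [pow_zero, Module.End.one_apply] at hspec
      exact hw₀ne hspec
    set v : EuclideanSpace ℂ (Fin n) := ((f - μ • 1) ^ (j₀ - 1)) w₀ with hv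
    have hvne : v ≠ 0 := by
      intro h0
      exact Nat.find_min hex (Nat.sub_lt (Nat.pos_of_ne_zero hj₀ne) one_pos) h0
    have hfv : (f - μ • 1) v = 0 := by
      rw [hv, ← Module.End.mul_apply, ← pow_succ']
      have h1 : j₀ - 1 + 1 = j₀ := Nat.succ_pred_eq_of_ne_zero hj₀ne
      rw [h1]
      exact Nat.find_spec hex
    have hfveq : f v = μ • v := by
      have h' : f v - μ • v = 0 := by
        simpa [LinearMap.sub_apply, LinearMap.smul_apply, Module.End.one_apply] using hfv
      exact sub_eq_zero.mp h'
    have hfmv : ∀ m : ℕ, (f ^ m) v = μ ^ m • v := by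
      intro m
      induction m with
      | zero => simp
      | succ m ih =>
        rw [pow_succ, Module.End.mul_apply, hfveq, map_smul, ih, smul_smul, ← pow_succ']
    set A : Module.End ℂ (EuclideanSpace ℂ (Fin n)) :=
      Polynomial.aeval f ((((X : ℂ[X]) - C μ) ^ (j₀ - 1)) * P) with hA
    have hAz : A z = v := by
      rw [hA, map_mul, Module.End.mul_apply, hqz, map_pow, aeval_X_sub_C_eq]
    have hAf : ∀ m : ℕ, A * (f ^ m) = (f ^ m) * A := by
      intro m
      have h1 : Polynomial.aeval f ((X : ℂ[X]) ^ m) = f ^ m := by simp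
      have h2 := aeval_commute f ((((X : ℂ[X]) - C μ) ^ (j₀ - 1)) * P) ((X : ℂ[X]) ^ m)
      rw [h1] at h2
      exact h2.eq
    set Ac : EuclideanSpace ℂ (Fin n) →L[ℂ] EuclideanSpace ℂ (Fin n) :=
      LinearMap.toContinuousLinearMap A with hAc
    set CA : ℝ := ‖Ac‖ with hCA
    have key : ∀ m : ℕ, ‖v‖ ≤ CA * u m := by
      intro m
      calc ‖v‖ ≤ ‖μ‖ ^ m * ‖v‖ := le_mul_of_one_le_left (norm_nonneg v) (one_le_pow₀ hμ)
        _ = ‖μ ^ m • v‖ := by rw [norm_smul, norm_pow]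
        _ = ‖(f ^ m) (A z)‖ := by rw [hAz, hfmv m]
        _ = ‖A ((f ^ m) z)‖ := by
            rw [← Module.End.mul_apply, ← hAf m, Module.End.mul_apply]
        _ = ‖Ac ((f ^ m) z)‖ := by
            rw [hAc]
            simp [LinearMap.coe_toContinuousLinearMap']
        _ ≤ CA * ‖(f ^ m) z‖ := Ac.le_opNorm _
        _ = CA * u m := by rw [hcoe m z]
    have hCAnn : 0 ≤ CA := norm_nonneg _
    have hvpos : 0 < ‖v‖ := norm_pos_iff.mpr hvne
    obtain ⟨m, hm⟩ := (hfreq (‖v‖ / (CA + 1)) (by positivity)).exists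
    have h1 := key m
    have h2 : CA * u m ≤ CA * (‖v‖ / (CA + 1)) :=
      mul_le_mul_of_nonneg_left hm.le hCAnn
    have h3 : CA * (‖v‖ / (CA + 1)) < ‖v‖ := by
      have hlt : CA / (CA + 1) < 1 := (div_lt_one (by positivity)).mpr (lt_add_one CA)
      calc CA * (‖v‖ / (CA + 1)) = (CA / (CA + 1)) * ‖v‖ := by ring
        _ < 1 * ‖v‖ := mul_lt_mul_of_pos_right hlt hvpos
        _ = ‖v‖ := one_mul _
    linarith
  -- Step 2: the orbit of z tends to zero
  have hvec : Tendsto (fun m => (T ^ m) z) atTop (𝓝 0) := by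
    have hzm : (fun m => (T ^ m) z) = fun m => ∑ ν ∈ c.support, (T ^ m) (c ν) := by
      funext m
      rw [hz', map_sum]
    have h0 : (0 : EuclideanSpace ℂ (Fin n)) = ∑ _ν ∈ c.support, (0 : EuclideanSpace ℂ (Fin n)) := by
      simp
    rw [hzm, h0]
    apply tendsto_finset_sum
    intro ν hν
    have hνlt : ‖ν‖ < 1 := by
      by_contra hge
      push_neg at hge
      exact (Finsupp.mem_support_iff.mp hν) (hbig ν hge)
    apply decay T ν hνlt (k ν) (c ν)
    rw [← end_pow_apply T ν (k ν) (c ν)]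
    exact hk ν
  have hlimsup : limsup u atTop = 0 := by
    have hnorm : Tendsto u atTop (𝓝 0) := by
      have := hvec.norm
      simpa [hu] using this
    exact hnorm.limsup_eq
  rw [hlimsup] at hpos
  exact lt_irrefl 0 hpos
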